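/- Let φ : A ⥤ B, ψ : C ⥤ B, and ℓ : A ⥤ C be functors between categories, and let λ : φ ⟶ ℓ ⋙ ψ be a natural transformation. Then (ℓ, λ) is an absolute left lifting diagram if and only if the canonical functor from the comma category ℓ↓C = Comma ℓ (𝟭 C) to the comma category φ↓ψ = Comma φ ψ — sending an object (a, c, k : ℓ(a) → c) to (a, c, λ_a ≫ ψ(k) : φ(a) → ψ(c)) and acting as the identity on the underlying morphism data — is an equivalence of categories. -/

import Mathlib

universe v₁ u₁ v₂ u₂ v₃ u₃ v₄ u₄

open CategoryTheory

/-- `(ℓ, lam)` is an absolute left lifting diagram of `φ` through `ψ` if for all functors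
`p : Z ⥤ A` and `q : Z ⥤ C`, pasting with `lam` gives a bijection from natural
transformations `p ⋙ ℓ ⟶ q` to natural transformations `p ⋙ φ ⟶ q ⋙ ψ`. -/
def IsAbsoluteLeftLifting {A : Type u₁} [Category.{v₁} A] {B : Type u₂} [Category.{v₂} B]
    {C : Type u₃} [Category.{v₃} C] (φ : A ⥤ B) (ψ : C ⥤ B) (ℓ : A ⥤ C)
    (lam : φ ⟶ ℓ ⋙ ψ) : Prop :=
  ∀ {Z : Type u₄} [Category.{v₄} Z] (p : Z ⥤ A) (q : Z ⥤ C),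
    Function.Bijective
      (fun μ : p ⋙ ℓ ⟶ q => (Functor.whiskerLeft p lam ≫ Functor.whiskerRight μ ψ : p ⋙ φ ⟶ q ⋙ ψ))

/-- The canonical comparison functor `ℓ↓C ⥤ φ↓ψ` induced by `lam : φ ⟶ ℓ ⋙ ψ`, sending
`(a, c, k : ℓ a ⟶ c)` to `(a, c, lam.app a ≫ ψ.map k : φ a ⟶ ψ c)`. -/
@[simps]
def commaComparison {A : Type u₁} [Category.{v₁} A] {B : Type u₂} [Category.{v₂} B]
    {C : Type u₃} [Category.{v₃} C] (φ : A ⥤ B) (ψ : C ⥤ B) (ℓ : A ⥤ C)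
    (lam : φ ⟶ ℓ ⋙ ψ) : Comma ℓ (𝟭 C) ⥤ Comma φ ψ where
  obj x := { left := x.left, right := x.right, hom := lam.app x.left ≫ ψ.map x.hom }
  map {x y} u :=
    { left := u.left
      right := u.right
      w := by
        have hw := u.w
        dsimp at hw ⊢
        rw [Category.assoc, ← ψ.map_comp, ← hw, ψ.map_comp]
        simp only [← Category.assoc]
        congr 1
        exact lam.naturality u.left }

/-- A one-object category in arbitrary universes. -/
def OnePt : Type u₄ := PUnit

instance : Category.{v₄} OnePt.{u₄} where
  Hom _ _ := PUnit
  id _ := ⟨⟩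
  comp _ _ := ⟨⟩

/-- The unique object of `OnePt`. -/
def OnePt.pt : OnePt.{u₄} := PUnit.unit

section Pointwise

variable {A : Type u₁} [Category.{v₁} A] {B : Type u₂} [Category.{v₂} B]
    {C : Type u₃} [Category.{v₃} C] (φ : A ⥤ B) (ψ : C ⥤ B) (ℓ : A ⥤ C) (lam : φ ⟶ ℓ ⋙ ψ)

/-- Pointwise bijectivity of pasting with `lam`. -/
def Pointwise : Prop :=
  ∀ (a : A) (c : C), Function.Bijective (fun k : ℓ.obj a ⟶ c => lam.app a ≫ ψ.map k)

theorem pointwise_of_lifting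
    (H : IsAbsoluteLeftLifting.{v₁, u₁, v₂, u₂, v₃, u₃, v₄, u₄} φ ψ ℓ lam) :
    Pointwise φ ψ ℓ lam := by
  intro a c
  let p : OnePt.{u₄} ⥤ A := (Functor.const _).obj a
  let q : OnePt.{u₄} ⥤ C := (Functor.const _).obj c
  have Hpq := H (Z := OnePt.{u₄}) p q
  let mk : (ℓ.obj a ⟶ c) → (p ⋙ ℓ ⟶ q) := fun k =>
    { app := fun _ => k
      naturality := by intro x y f; simp [p, q] }
  constructor
  · intro k k' hk
    have h1 : (fun μ : p ⋙ ℓ ⟶ q => (Functor.whiskerLeft p lam ≫ Functor.whiskerRight μ ψ : p ⋙ φ ⟶ q ⋙ ψ))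
        (mk k) = (fun μ : p ⋙ ℓ ⟶ q => Functor.whiskerLeft p lam ≫ Functor.whiskerRight μ ψ) (mk k') := by
      ext z
      simpa [mk, p, q] using hk
    have h2 := Hpq.1 h1
    have h3 := congrArg (fun μ : p ⋙ ℓ ⟶ q => μ.app OnePt.pt) h2
    simpa [mk] using h3
  · intro h
    let ν : p ⋙ φ ⟶ q ⋙ ψ :=
      { app := fun _ => h
        naturality := by intro x y f; simp [p, q] }
    obtain ⟨μ, hμ⟩ := Hpq.2 ν
    refine ⟨μ.app OnePt.pt, ?_⟩
    have := congrArg (fun (σ : p ⋙ φ ⟶ q ⋙ ψ) => σ.app OnePt.pt) hμ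
    exact this

theorem lifting_of_pointwise (H : Pointwise φ ψ ℓ lam) :
    IsAbsoluteLeftLifting.{v₁, u₁, v₂, u₂, v₃, u₃, v₄, u₄} φ ψ ℓ lam := by
  intro Z _ p q
  constructor
  · intro μ μ' h
    ext z
    exact (H (p.obj z) (q.obj z)).1 (congrArg (fun σ => NatTrans.app σ z) h)
  · intro ν
    have hch : ∀ z : Z, ∃ k : ℓ.obj (p.obj z) ⟶ q.obj z, lam.app (p.obj z) ≫ ψ.map k = ν.app z :=
      fun z => (H (p.obj z) (q.obj z)).2 (ν.app z)
    choose k hk using hch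
    refine ⟨{ app := k, naturality := ?_ }, ?_⟩
    · intro x y f
      apply (H (p.obj x) (q.obj y)).1
      dsimp
      have hnat : lam.app (p.obj x) ≫ ψ.map (ℓ.map (p.map f)) =
          φ.map (p.map f) ≫ lam.app (p.obj y) := (lam.naturality (p.map f)).symm
      rw [ψ.map_comp, ψ.map_comp, ← Category.assoc, ← Category.assoc, hnat,
        Category.assoc, hk y, hk x]
      simpa using ν.naturality f
    · ext z
      exact hk z

theorem equivalence_of_pointwise (H : Pointwise φ ψ ℓ lam) :
    (commaComparison φ ψ ℓ lam).IsEquivalence := by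
  have faithful : (commaComparison φ ψ ℓ lam).Faithful := by
    constructor
    intro x y f g h
    have hl : ((commaComparison φ ψ ℓ lam).map f).left =
        ((commaComparison φ ψ ℓ lam).map g).left := congrArg CommaMorphism.left h
    have hr : ((commaComparison φ ψ ℓ lam).map f).right =
        ((commaComparison φ ψ ℓ lam).map g).right := congrArg CommaMorphism.right h
    ext
    · exact hl
    · exact hr
  have full : (commaComparison φ ψ ℓ lam).Full := by
    constructor
    intro x y g
    refine ⟨{ left := g.left, right := g.right, w := ?_ }, ?_⟩
    · apply (H x.left y.right).1
      dsimp
      rw [ψ.map_comp, ψ.map_comp, ← Category.assoc, ← Category.assoc]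
      erw [show lam.app x.left ≫ ψ.map (ℓ.map g.left) = φ.map g.left ≫ lam.app y.left from
        (lam.naturality g.left).symm]
      have hw := g.w
      simp only [commaComparison_obj_hom] at hw
      rw [Category.assoc]
      exact (Category.assoc _ _ _).trans (hw.trans (Category.assoc _ _ _))
    · ext <;> rfl
  have essSurj : (commaComparison φ ψ ℓ lam).EssSurj := by
    constructor
    intro x
    obtain ⟨a, c, h⟩ := x
    obtain ⟨k, hk⟩ := (H a c).2 h
    have hk' : lam.app a ≫ ψ.map k = h := hk
    refine ⟨{ left := a, right := c, hom := k }, ⟨eqToIso ?_⟩⟩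
    show ({ left := a, right := c, hom := lam.app a ≫ ψ.map k } : Comma φ ψ)
      = { left := a, right := c, hom := h }
    rw [hk']
  exact { faithful := faithful, full := full, essSurj := essSurj }

theorem pointwise_of_equivalence (H : (commaComparison φ ψ ℓ lam).IsEquivalence) :
    Pointwise φ ψ ℓ lam := by
  haveI := H.faithful
  haveI := H.full
  haveI := H.essSurj
  intro a c
  constructor
  · intro k k' hk
    have hk' : lam.app a ≫ ψ.map k = lam.app a ≫ ψ.map k' := hk
    have hobj : (commaComparison φ ψ ℓ lam).obj { left := a, right := c, hom := k }
        = (commaComparison φ ψ ℓ lam).obj { left := a, right := c, hom := k' } := by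
      show ({ left := a, right := c, hom := lam.app a ≫ ψ.map k } : Comma φ ψ)
        = { left := a, right := c, hom := lam.app a ≫ ψ.map k' }
      rw [hk']
    obtain ⟨g, hg⟩ := (commaComparison φ ψ ℓ lam).map_surjective (eqToHom hobj)
    have hl : g.left = 𝟙 a := by
      have h1 : ((commaComparison φ ψ ℓ lam).map g).left = (eqToHom hobj).left :=
        congrArg CommaMorphism.left hg
      rw [Comma.eqToHom_left] at h1
      exact h1
    have hr : g.right = 𝟙 c := by
      have h1 : ((commaComparison φ ψ ℓ lam).map g).right = (eqToHom hobj).right :=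
        congrArg CommaMorphism.right hg
      rw [Comma.eqToHom_right] at h1
      exact h1
    have hw := g.w
    dsimp at hw
    rw [hl, hr] at hw
    simpa using hw.symm
  · intro h
    let x : Comma φ ψ := { left := a, right := c, hom := h }
    let y := (commaComparison φ ψ ℓ lam).objPreimage x
    let e : (commaComparison φ ψ ℓ lam).obj y ≅ x :=
      (commaComparison φ ψ ℓ lam).objObjPreimageIso x
    have hid : e.inv.left ≫ e.hom.left = 𝟙 a := by
      rw [← Comma.comp_left, e.inv_hom_id]
      rfl
    refine ⟨ℓ.map e.inv.left ≫ y.hom ≫ e.hom.right, ?_⟩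
    have hw : φ.map e.hom.left ≫ h = (lam.app y.left ≫ ψ.map y.hom) ≫ ψ.map e.hom.right := by
      exact e.hom.w
    have hnat : lam.app a ≫ ψ.map (ℓ.map e.inv.left) = φ.map e.inv.left ≫ lam.app y.left :=
      (lam.naturality e.inv.left).symm
    calc lam.app a ≫ ψ.map (ℓ.map e.inv.left ≫ y.hom ≫ e.hom.right)
        = (lam.app a ≫ ψ.map (ℓ.map e.inv.left)) ≫ ψ.map y.hom ≫ ψ.map e.hom.right := by
          rw [ψ.map_comp]; erw [ψ.map_comp]; exact (Category.assoc _ _ _).symm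
      _ = φ.map e.inv.left ≫ (lam.app y.left ≫ ψ.map y.hom) ≫ ψ.map e.hom.right := by
          rw [hnat]
          exact (Category.assoc _ _ _).trans
            (congrArg (fun t => φ.map e.inv.left ≫ t) (Category.assoc _ _ _).symm)
      _ = φ.map e.inv.left ≫ φ.map e.hom.left ≫ h := by
          exact congrArg (fun t => φ.map e.inv.left ≫ t) hw.symm
      _ = h := by rw [← Category.assoc, ← φ.map_comp, hid, φ.map_id, Category.id_comp]

end Pointwise

/-- `(ℓ, lam)` is an absolute left lifting diagram if and only if the canonical comparison
functor `ℓ↓C ⥤ φ↓ψ` is an equivalence of categories. -/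
theorem isAbsoluteLeftLifting_iff_commaComparison_isEquivalence
    {A : Type u₁} [Category.{v₁} A] {B : Type u₂} [Category.{v₂} B]
    {C : Type u₃} [Category.{v₃} C] (φ : A ⥤ B) (ψ : C ⥤ B) (ℓ : A ⥤ C)
    (lam : φ ⟶ ℓ ⋙ ψ) :
    IsAbsoluteLeftLifting.{v₁, u₁, v₂, u₂, v₃, u₃, v₄, u₄} φ ψ ℓ lam ↔
      (commaComparison φ ψ ℓ lam).IsEquivalence := by
  constructor
  · intro H
    exact equivalence_of_pointwise φ ψ ℓ lam (pointwise_of_lifting φ ψ ℓ lam H)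
  · intro H
    exact lifting_of_pointwise φ ψ ℓ lam (pointwise_of_equivalence φ ψ ℓ lam H)
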